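/- Fix h > 0, λ > 0, p > 0. Let φ : ℝ × ℤ → ℂ be differentiable in t at each n, and let a₀, a₂ : ℝ × ℤ → ℝ and a₁ : ℝ × ℤ → ℝ be arbitrary. Suppose that for all t ∈ ℝ and n ∈ ℤ, i·(∂ₜφ(t,n) − i a₀(t,n) φ(t,n)) + D₁⁻D₁⁺φ(t,n) − a₂(t,n)² φ(t,n) + λ|φ(t,n)|^{2p} φ(t,n) = 0, where the covariant derivatives are taken with gauge a₁(t,·). Then for all t ∈ ℝ and n ∈ ℤ, (1/2)·∂ₜ|φ(t,n)|² + (1/h)·( Im( conj(φ(t,n)) D₁⁺φ(t,n) ) − Im( conj(φ(t,n−1)) D₁⁺φ(t,n−1) ) ) = 0. -/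

import Mathlib

/-- Discrete forward covariant derivative `D₁⁺φ(n) = (e^{−i h a(n)} φ(n+1) − φ(n))/h`,
where `a(n)` is the gauge component `A₁` at the half-site `n + 1/2`. -/
noncomputable def D1p (h : ℝ) (a : ℤ → ℝ) (φ : ℤ → ℂ) (n : ℤ) : ℂ :=
  (Complex.exp (-Complex.I * h * a n) * φ (n + 1) - φ n) / h

/-- Discrete backward covariant derivative `D₁⁻φ(n) = (φ(n) − e^{i h a(n−1)} φ(n−1))/h`. -/
noncomputable def D1m (h : ℝ) (a : ℤ → ℝ) (φ : ℤ → ℂ) (n : ℤ) : ℂ :=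
  (φ n - Complex.exp (Complex.I * h * a (n - 1)) * φ (n - 1)) / h

/-- **Discrete balance (local mass conservation) equation** for the scalar field of
the discrete Chern–Simons–Schrödinger system:
`½ ∂ₜ|φ(t,n)|² + ∇₁⁻ Im(φ̄ D₁⁺φ)(t,n) = 0`. -/
theorem discrete_CSS_balance_equation
    (h lam p : ℝ) (hh : 0 < h) (hlam : 0 < lam) (hp : 0 < p)
    (φ : ℝ → ℤ → ℂ) (a₀ a₁ a₂ : ℝ → ℤ → ℝ)
    (hdiff : ∀ n : ℤ, Differentiable ℝ (fun t => φ t n))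
    (heq : ∀ (t : ℝ) (n : ℤ),
      Complex.I * (deriv (fun s => φ s n) t - Complex.I * (a₀ t n : ℂ) * φ t n)
        + D1m h (a₁ t) (D1p h (a₁ t) (φ t)) n
        - ((a₂ t n : ℂ)) ^ 2 * φ t n
        + (lam : ℂ) * ((‖φ t n‖ ^ (2 * p) : ℝ) : ℂ) * φ t n = 0) :
    ∀ (t : ℝ) (n : ℤ),
      (1 / 2) * deriv (fun s => ‖φ s n‖ ^ 2) t
        + (1 / h) * (((starRingEnd ℂ) (φ t n) * D1p h (a₁ t) (φ t) n).im
            - ((starRingEnd ℂ) (φ t (n - 1)) * D1p h (a₁ t) (φ t) (n - 1)).im) = 0 := by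
  intro t n
  have hdz : HasDerivAt (fun s => φ s n) (deriv (fun s => φ s n) t) t :=
    ((hdiff n) t).hasDerivAt
  set d := deriv (fun s => φ s n) t with hdd
  set z := φ t n with hz
  set zm := φ t (n - 1) with hzm
  set Fn := D1p h (a₁ t) (φ t) n with hFn
  set Fm := D1p h (a₁ t) (φ t) (n - 1) with hFm
  set M := D1m h (a₁ t) (D1p h (a₁ t) (φ t)) n with hM
  -- derivative of |φ|²
  have habs : deriv (fun s => ‖φ s n‖ ^ 2) t
      = 2 * ((starRingEnd ℂ) z * d).re := by
    have h1 : HasDerivAt (fun s => ((starRingEnd ℂ) (φ s n) * φ s n).re)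
        (Complex.reCLM ((starRingEnd ℂ) d * z + (starRingEnd ℂ) z * d)) t :=
      Complex.reCLM.hasFDerivAt.comp_hasDerivAt t (hdz.star.mul hdz)
    have h2 : (fun s => ‖φ s n‖ ^ 2)
        = fun s => ((starRingEnd ℂ) (φ s n) * φ s n).re := by
      funext s
      simp [Complex.sq_norm, Complex.normSq_apply, Complex.mul_re]
    rw [h2, h1.deriv]
    simp [Complex.add_re, Complex.mul_re, Complex.conj_re, Complex.conj_im]
    ring
  -- Lemma A : Re(z̄ d) + Im(z̄ M) = 0
  have hzz : ((starRingEnd ℂ) z * z).im = 0 := by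
    simp [Complex.mul_im]; ring
  have hA : ((starRingEnd ℂ) z * d).re + ((starRingEnd ℂ) z * M).im = 0 := by
    have h0 := heq t n
    have h1 : Complex.I * ((starRingEnd ℂ) z * d)
        + (a₀ t n : ℂ) * ((starRingEnd ℂ) z * z)
        + (starRingEnd ℂ) z * M
        - ((a₂ t n : ℂ)) ^ 2 * ((starRingEnd ℂ) z * z)
        + (lam : ℂ) * ((‖z‖ ^ (2 * p) : ℝ) : ℂ) * ((starRingEnd ℂ) z * z)
        = 0 := by
      rw [← hz, ← hdd, ← hM] at h0
      linear_combination ((starRingEnd ℂ) z) * h0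
        + ((a₀ t n : ℂ) * ((starRingEnd ℂ) z * z)) * Complex.I_sq
    have h2 := congrArg Complex.im h1
    simp only [Complex.add_im, Complex.sub_im, Complex.mul_im, Complex.mul_re,
      Complex.I_re, Complex.I_im, Complex.ofReal_re, Complex.ofReal_im, hzz,
      ← Complex.ofReal_pow, Complex.zero_im, Complex.conj_re, Complex.conj_im,
      mul_zero, zero_mul, zero_add, add_zero, sub_zero, one_mul] at h2
    simp only [Complex.mul_re, Complex.mul_im, Complex.conj_re, Complex.conj_im]
    linarith [h2]
  -- Lemma B : Im(z̄ M) = (1/h) * (Im(z̄ Fn) - Im(z̄m Fm))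
  set E := Complex.exp (Complex.I * h * a₁ t (n - 1)) with hE
  set E' := Complex.exp (-Complex.I * h * a₁ t (n - 1)) with hE'
  have hcE : (starRingEnd ℂ) E = E' := by
    rw [hE, hE', ← Complex.exp_conj]
    congr 1
    simp [map_mul, Complex.conj_I, Complex.conj_ofReal]
  have hcE' : (starRingEnd ℂ) E' = E := by
    rw [hE, hE', ← Complex.exp_conj]
    congr 1
    simp [map_mul, Complex.conj_I, Complex.conj_ofReal]
  have hFm' : Fm = (E' * z - zm) / h := by
    rw [hFm, D1p, hE', hz, hzm]
    norm_num
  have hMeq : M = (Fn - E * Fm) / h := by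
    rw [hM, D1m, hE, hFn, hFm]
  -- the key self-conjugacy fact
  have hkey : ((starRingEnd ℂ) z * (E * Fm)).im = ((starRingEnd ℂ) zm * Fm).im := by
    have hsc : (starRingEnd ℂ) ((starRingEnd ℂ) z * (E * Fm) - (starRingEnd ℂ) zm * Fm)
        = (starRingEnd ℂ) z * (E * Fm) - (starRingEnd ℂ) zm * Fm := by
      rw [hFm']
      simp only [map_sub, map_mul, map_div₀, Complex.conj_conj, hcE, hcE',
        Complex.conj_ofReal]
      ring
    have := Complex.conj_eq_iff_im.mp hsc
    have h3 : ((starRingEnd ℂ) z * (E * Fm)).im - ((starRingEnd ℂ) zm * Fm).im = 0 := by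
      simpa [Complex.sub_im] using this
    linarith
  have hB : ((starRingEnd ℂ) z * M).im
      = (1 / h) * (((starRingEnd ℂ) z * Fn).im - ((starRingEnd ℂ) zm * Fm).im) := by
    have hsplit : (starRingEnd ℂ) z * M
        = ((starRingEnd ℂ) z * Fn) / h - ((starRingEnd ℂ) z * (E * Fm)) / h := by
      rw [hMeq]; ring
    rw [hsplit]
    rw [Complex.sub_im, Complex.div_ofReal_im, Complex.div_ofReal_im, hkey]
    ring
  rw [habs]
  linarith [hA, hB]
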